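/- Lower bound on the optimum of the laminar gap instance: let L be a sufficiently large integer with L+1 a power of 2, and consider the instance of 1|r_j,d_j|Σ p_j U'_j whose jobs form a full binary tree of L+1 levels, where each of the 2^ℓ jobs at level ℓ has size 2^{L−ℓ}, and the k-th job from the left at level ℓ has release time (L+1)(k−1)2^{L−ℓ} and deadline (L+1)k·2^{L−ℓ}; so T = Σ_j p_j = (L+1)2^L = max_j d_j. Then every feasible solution processes at most 0.8·T job units, i.e., the optimum cost is at least 0.2·T. -/

import Mathlib

open Finset

/-- The jobs of the laminar gap instance: a full binary tree with `L+1` levels; level `ℓ`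
has `2^ℓ` jobs. -/
def TreeJob (L : ℕ) := (ℓ : Fin (L + 1)) × Fin (2 ^ (ℓ : ℕ))

instance (L : ℕ) : Fintype (TreeJob L) := by unfold TreeJob; infer_instance

/-- The size of a level-`ℓ` job is `2^(L−ℓ)`. -/
def treeSize (L : ℕ) (j : TreeJob L) : ℕ := 2 ^ (L - (j.1 : ℕ))

/-- The `k`-th job at level `ℓ` has release time `(L+1)·k·2^(L−ℓ)`. -/
def treeRel (L : ℕ) (j : TreeJob L) : ℕ := (L + 1) * (j.2 : ℕ) * 2 ^ (L - (j.1 : ℕ))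

/-- The `k`-th job at level `ℓ` has deadline `(L+1)·(k+1)·2^(L−ℓ)`. -/
def treeDead (L : ℕ) (j : TreeJob L) : ℕ := (L + 1) * ((j.2 : ℕ) + 1) * 2 ^ (L - (j.1 : ℕ))

lemma sum_two_pow_lt (n : ℕ) : ∑ i ∈ Finset.range n, 2 ^ i < 2 ^ n := by
  induction n with
  | zero => simp
  | succ n ih => rw [Finset.sum_range_succ, pow_succ]; omega

/-- Windows at level `ℓ'` fully covered by the interval `(S, S+Q]`. -/
def Wset (L : ℕ) (S Q : ℕ) (ℓ' : Fin (L + 1)) : Finset (Fin (2 ^ (ℓ' : ℕ))) :=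
  univ.filter (fun k => S ≤ (L + 1) * (k : ℕ) * 2 ^ (L - (ℓ' : ℕ)) ∧
    (L + 1) * ((k : ℕ) + 1) * 2 ^ (L - (ℓ' : ℕ)) ≤ S + Q)

/-- An interval `(S, S+Q]` inside `(0, (L+1)·2^L]` fully covers at least `Q/w − 2` windows
of length `w = (L+1)·2^(L−ℓ')` at level `ℓ'`. -/
lemma killer_bound (L S Q : ℕ) (hSQ : S + Q ≤ (L + 1) * 2 ^ L) (ℓ' : Fin (L + 1)) :
    Q ≤ ((Wset L S Q ℓ').card + 2) * ((L + 1) * 2 ^ (L - (ℓ' : ℕ))) := by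
  set w := (L + 1) * 2 ^ (L - (ℓ' : ℕ)) with hw
  have hw0 : 0 < w := by positivity
  set a := S / w with ha
  set c := (S + Q) / w with hc
  have hpow : 2 ^ (ℓ' : ℕ) * w = (L + 1) * 2 ^ L := by
    have h1 : 2 ^ (ℓ' : ℕ) * 2 ^ (L - (ℓ' : ℕ)) = 2 ^ L :=
      pow_mul_pow_sub 2 (Nat.lt_succ_iff.mp ℓ'.isLt)
    calc 2 ^ (ℓ' : ℕ) * w = (L + 1) * (2 ^ (ℓ' : ℕ) * 2 ^ (L - (ℓ' : ℕ))) := by rw [hw]; ring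
      _ = (L + 1) * 2 ^ L := by rw [h1]
  have hlt : ∀ m ∈ Finset.Ico (a + 1) c, m < 2 ^ (ℓ' : ℕ) := by
    intro m hm
    rw [Finset.mem_Ico] at hm
    have h1 : (m + 1) * w ≤ c * w := Nat.mul_le_mul_right w (by omega)
    have h2 : c * w ≤ S + Q := Nat.div_mul_le_self _ _
    have h3 : (m + 1) * w ≤ 2 ^ (ℓ' : ℕ) * w := by
      rw [hpow]; exact le_trans h1 (le_trans h2 hSQ)
    have := Nat.le_of_mul_le_mul_right h3 hw0
    omega
  have hSlt : S < (a + 1) * w := by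
    have hdm := Nat.div_add_mod S w
    have hmod : S % w < w := Nat.mod_lt _ hw0
    calc S = w * a + S % w := by rw [ha]; omega
      _ < w * a + w := by omega
      _ = (a + 1) * w := by ring
  have hcard : c - (a + 1) ≤ (Wset L S Q ℓ').card := by
    have h2p : (0 : ℕ) < 2 ^ (ℓ' : ℕ) := by positivity
    have := Finset.card_le_card_of_injOn
      (f := fun m : ℕ => (⟨m % 2 ^ (ℓ' : ℕ), Nat.mod_lt _ h2p⟩ : Fin (2 ^ (ℓ' : ℕ))))
      (s := Finset.Ico (a + 1) c) (t := Wset L S Q ℓ') ?_ ?_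
    · simpa [Nat.card_Ico] using this
    · intro m hm
      have hm2 := hlt m hm
      rw [Finset.mem_coe, Finset.mem_Ico] at hm
      simp only [Finset.mem_coe, Wset, Finset.mem_filter, Finset.mem_univ, true_and, Nat.mod_eq_of_lt hm2]
      constructor
      · have h2 : (a + 1) * w ≤ m * w := Nat.mul_le_mul_right w (by omega)
        calc S ≤ m * w := le_of_lt (lt_of_lt_of_le hSlt h2)
          _ = (L + 1) * m * 2 ^ (L - (ℓ' : ℕ)) := by rw [hw]; ring
      · have h1 : (m + 1) * w ≤ c * w := Nat.mul_le_mul_right w (by omega)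
        have h2 : c * w ≤ S + Q := Nat.div_mul_le_self _ _
        calc (L + 1) * (m + 1) * 2 ^ (L - (ℓ' : ℕ)) = (m + 1) * w := by rw [hw]; ring
          _ ≤ S + Q := le_trans h1 h2
    · intro m hm m' hm' hmm
      have h1 := hlt m hm
      have h2 := hlt m' hm'
      have := congrArg Fin.val hmm
      simpa [Nat.mod_eq_of_lt h1, Nat.mod_eq_of_lt h2] using this
  have h1 : S + Q < (c + 1) * w := by
    have hdm := Nat.div_add_mod (S + Q) w
    have hmod : (S + Q) % w < w := Nat.mod_lt _ hw0
    calc S + Q = w * c + (S + Q) % w := by rw [hc]; omega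
      _ < w * c + w := by omega
      _ = (c + 1) * w := by ring
  have h2 : a * w ≤ S := by
    have := Nat.div_mul_le_self S w
    rw [ha]; omega
  have h3 : (c + 1) * w ≤ ((Wset L S Q ℓ').card + 2) * w + a * w := by
    calc (c + 1) * w ≤ ((Wset L S Q ℓ').card + a + 2) * w :=
        Nat.mul_le_mul_right w (by omega)
      _ = ((Wset L S Q ℓ').card + 2) * w + a * w := by ring
  have h4 : Q + a * w < ((Wset L S Q ℓ').card + 2) * w + a * w := by
    calc Q + a * w ≤ Q + S := by omega
      _ = S + Q := by omega
      _ < (c + 1) * w := h1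
      _ ≤ _ := h3
  omega

/-- The bottom-level (level ≥ H) jobs whose window is fully covered by `(S, S+Q]`. -/
def Vset (L H : ℕ) (S Q : ℕ) : Finset (TreeJob L) :=
  (univ : Finset (Fin (L + 1))).sigma
    (fun ℓ' => if H ≤ (ℓ' : ℕ) then Wset L S Q ℓ' else ∅)

lemma mem_Vset {L H S Q : ℕ} {v : TreeJob L} :
    v ∈ Vset L H S Q ↔ H ≤ (v.1 : ℕ) ∧ S ≤ treeRel L v ∧ treeDead L v ≤ S + Q := by
  have h0 : v ∈ Vset L H S Q ↔ v.1 ∈ (univ : Finset (Fin (L + 1))) ∧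
      v.2 ∈ (if H ≤ (v.1 : ℕ) then Wset L S Q v.1 else ∅) := Finset.mem_sigma
  rw [h0]
  by_cases h : H ≤ (v.1 : ℕ) <;> simp [Wset, h, treeRel, treeDead]

lemma Vset_sum (L H S Q : ℕ) (f : TreeJob L → ℕ) :
    ∑ v ∈ Vset L H S Q, f v =
      ∑ ℓ' : Fin (L + 1), ∑ k ∈ (if H ≤ (ℓ' : ℕ) then Wset L S Q ℓ' else ∅), f ⟨ℓ', k⟩ :=
  Finset.sum_sigma _ _ _

lemma sum_fin_filter {n : ℕ} (p : ℕ → Prop) [DecidablePred p] (f : ℕ → ℕ) :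
    ∑ ℓ ∈ (univ : Finset (Fin n)).filter (fun ℓ : Fin n => p (ℓ : ℕ)), f (ℓ : ℕ)
      = ∑ m ∈ (Finset.range n).filter p, f m := by
  rw [Finset.sum_filter, Finset.sum_filter,
    Fin.sum_univ_eq_sum_range (fun m => if p m then f m else 0)]

lemma card_fin_filter {n : ℕ} (p : ℕ → Prop) [DecidablePred p] :
    ((univ : Finset (Fin n)).filter (fun ℓ : Fin n => p (ℓ : ℕ))).card
      = ((Finset.range n).filter p).card := by
  rw [Finset.card_filter, Finset.card_filter,
    Fin.sum_univ_eq_sum_range (fun m => if p m then 1 else 0)]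

/-- Decompose a sum over level-filtered jobs into levels. -/
lemma filter_level_sum (L : ℕ) (p : ℕ → Prop) [DecidablePred p] (f : TreeJob L → ℕ) :
    ∑ j ∈ (univ : Finset (TreeJob L)).filter (fun j => p (j.1 : ℕ)), f j
      = ∑ ℓ ∈ (univ : Finset (Fin (L + 1))).filter (fun ℓ : Fin (L + 1) => p (ℓ : ℕ)),
          ∑ k : Fin (2 ^ (ℓ : ℕ)), f ⟨ℓ, k⟩ := by
  have h1 : (univ : Finset (TreeJob L)).filter (fun j => p (j.1 : ℕ))
      = ((univ : Finset (Fin (L + 1))).filter (fun ℓ : Fin (L + 1) => p (ℓ : ℕ))).sigma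
          (fun ℓ => univ) := by
    ext v
    have h2 : v ∈ ((univ : Finset (Fin (L + 1))).filter
          (fun ℓ : Fin (L + 1) => p (ℓ : ℕ))).sigma (fun ℓ => univ)
        ↔ v.1 ∈ (univ : Finset (Fin (L + 1))).filter (fun ℓ : Fin (L + 1) => p (ℓ : ℕ))
          ∧ v.2 ∈ (univ : Finset (Fin (2 ^ (v.1 : ℕ)))) := Finset.mem_sigma
    refine Iff.trans ?_ h2.symm; simp [Finset.mem_filter]
  rw [h1]
  exact Finset.sum_sigma _ _ _

lemma level_size_sum (L : ℕ) (ℓ : Fin (L + 1)) :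
    ∑ k : Fin (2 ^ (ℓ : ℕ)), treeSize L ⟨ℓ, k⟩ = 2 ^ L := by
  simp only [treeSize]
  rw [Finset.sum_const, Finset.card_univ, Fintype.card_fin, smul_eq_mul]
  exact pow_mul_pow_sub 2 (Nat.lt_succ_iff.mp ℓ.isLt)

section
set_option linter.unusedSectionVars false
variable {L H : ℕ} (hH : L + 1 = 2 * H) (hH1 : 1 ≤ H)
include hH hH1

lemma range_filter_ge : ((Finset.range (L + 1)).filter (fun m => H ≤ m)) = Finset.Ico H (L + 1) := by
  ext m; simp [Finset.mem_Ico]; omega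

lemma card_range_ge : ((Finset.range (L + 1)).filter (fun m => H ≤ m)).card = H := by
  rw [range_filter_ge hH hH1, Nat.card_Ico]; omega

lemma card_range_not_lt : ((Finset.range (L + 1)).filter (fun m => ¬ m < H)).card = H := by
  have h : ((Finset.range (L + 1)).filter (fun m => ¬ m < H))
      = ((Finset.range (L + 1)).filter (fun m => H ≤ m)) := by
    ext m; simp [not_lt]
  rw [h]; exact card_range_ge hH hH1

lemma card_range_lt : ((Finset.range (L + 1)).filter (fun m => m < H)).card = H := by
  have h : ((Finset.range (L + 1)).filter (fun m => m < H)) = Finset.range H := by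
    ext m; simp; omega
  rw [h, Finset.card_range]

lemma sum_range_lt_pow : ∑ m ∈ (Finset.range (L + 1)).filter (fun m => m < H), 2 ^ m ≤ 2 ^ H := by
  have h : ((Finset.range (L + 1)).filter (fun m => m < H)) = Finset.range H := by
    ext m; simp; omega
  rw [h]; exact le_of_lt (sum_two_pow_lt H)

lemma sum_range_ge_pow :
    ∑ m ∈ (Finset.range (L + 1)).filter (fun m => H ≤ m), 2 ^ (L - m) ≤ 2 ^ H := by
  rw [range_filter_ge hH hH1, Finset.sum_Ico_eq_sum_range]
  have h1 : L + 1 - H = H := by omega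
  rw [h1]
  have h2 : ∀ i ∈ Finset.range H, 2 ^ (L - (H + i)) = 2 ^ (H - 1 - i) := by
    intro i _; congr 1; omega
  rw [Finset.sum_congr rfl h2, Finset.sum_range_reflect (fun i => 2 ^ i) H]
  exact le_of_lt (sum_two_pow_lt H)

end

theorem stmt13 :
    ∃ L₀ : ℕ, ∀ L : ℕ, L₀ ≤ L → (∃ e : ℕ, L + 1 = 2 ^ e) →
      ∀ s q : TreeJob L → ℕ,
        (∀ j, q j ≤ treeSize L j) →
        (∀ j, treeRel L j ≤ s j) →
        (∀ j, s j + q j ≤ treeDead L j) →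
        (∀ j j', j ≠ j' → 0 < q j → 0 < q j' →
          s j + q j ≤ s j' ∨ s j' + q j' ≤ s j) →
        ((∑ j, q j : ℕ) : ℝ) ≤ 0.8 * (((L : ℝ) + 1) * 2 ^ L) := by
  classical
  refine ⟨80, fun L hL hpow s q hq hrel hdead hdisj => ?_⟩
  obtain ⟨e, he⟩ := hpow
  have hdvd : 2 ∣ L + 1 := by
    rcases e with _ | e
    · omega
    · exact he ▸ dvd_pow_self 2 (Nat.succ_ne_zero e)
  obtain ⟨H, hH2⟩ := hdvd
  have hH40 : 40 ≤ H := by omega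
  have hH1 : 1 ≤ H := by omega
  -- total horizon bound
  have hSQ : ∀ j : TreeJob L, s j + q j ≤ (L + 1) * 2 ^ L := by
    intro j
    refine (hdead j).trans ?_
    have hk : (j.2 : ℕ) + 1 ≤ 2 ^ (j.1 : ℕ) := j.2.isLt
    calc treeDead L j = (L + 1) * ((j.2 : ℕ) + 1) * 2 ^ (L - (j.1 : ℕ)) := rfl
      _ ≤ (L + 1) * 2 ^ (j.1 : ℕ) * 2 ^ (L - (j.1 : ℕ)) :=
          Nat.mul_le_mul_right _ (Nat.mul_le_mul_left _ hk)
      _ = (L + 1) * 2 ^ L := by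
          rw [mul_assoc, pow_mul_pow_sub 2 (Nat.lt_succ_iff.mp j.1.isLt)]
  have hrd : ∀ v : TreeJob L, treeRel L v < treeDead L v := by
    intro v
    have hx : 0 < (L + 1) * 2 ^ (L - (v.1 : ℕ)) := by positivity
    have h : treeDead L v = treeRel L v + (L + 1) * 2 ^ (L - (v.1 : ℕ)) := by
      unfold treeRel treeDead; ring
    omega
  set Top : Finset (TreeJob L) := univ.filter (fun j => (j.1 : ℕ) < H) with hTopdef
  set Bot : Finset (TreeJob L) := univ.filter (fun j => ¬ (j.1 : ℕ) < H) with hBotdef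
  set K : Finset (TreeJob L) := Top.biUnion (fun j => Vset L H (s j) (q j)) with hKdef
  -- killed jobs are processed zero
  have hVzero : ∀ j ∈ Top, ∀ v ∈ Vset L H (s j) (q j), q v = 0 := by
    intro j hj v hv
    rw [mem_Vset] at hv
    obtain ⟨hHv, hcov1, hcov2⟩ := hv
    have hjH : (j.1 : ℕ) < H := (Finset.mem_filter.mp hj).2
    have hne : j ≠ v := by
      intro h; rw [h] at hjH; omega
    by_contra hqv0
    have hqv : 0 < q v := Nat.pos_of_ne_zero hqv0
    have h3 := hrd v
    have hqj : 0 < q j := by omega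
    have h1 := hrel v
    have h2 := hdead v
    rcases hdisj j v hne hqj hqv with h | h <;> omega
  have hVdisj : (↑Top : Set (TreeJob L)).PairwiseDisjoint
      (fun j => Vset L H (s j) (q j)) := by
    intro j hj j' hj' hne
    simp only [Function.onFun]
    rw [Finset.disjoint_left]
    intro v hv hv'
    rw [mem_Vset] at hv hv'
    have h3 := hrd v
    have hqj : 0 < q j := by omega
    have hqj' : 0 < q j' := by omega
    rcases hdisj j j' hne hqj hqj' with h | h <;> omega
  have hKsub : K ⊆ Bot := by
    intro v hv
    rw [hKdef, Finset.mem_biUnion] at hv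
    obtain ⟨j, hj, hv⟩ := hv
    rw [mem_Vset] at hv
    rw [hBotdef, Finset.mem_filter]
    exact ⟨Finset.mem_univ v, by omega⟩
  have hKzero : ∀ v ∈ K, q v = 0 := by
    intro v hv
    rw [hKdef, Finset.mem_biUnion] at hv
    obtain ⟨j, hj, hv⟩ := hv
    exact hVzero j hj v hv
  -- the bottom levels
  set FF : Finset (Fin (L + 1)) :=
    (univ : Finset (Fin (L + 1))).filter (fun ℓ : Fin (L + 1) => H ≤ (ℓ : ℕ)) with hFFdef
  have hcardFF : FF.card = H := by
    rw [hFFdef, card_fin_filter (fun m => H ≤ m)]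
    exact card_range_ge hH2 hH1
  have hgeoFF : ∑ ℓ' ∈ FF, 2 ^ (L - (ℓ' : ℕ)) ≤ 2 ^ H := by
    rw [hFFdef, sum_fin_filter (fun m => H ≤ m) (fun m => 2 ^ (L - m))]
    exact sum_range_ge_pow hH2 hH1
  -- per-level killed mass equals the Vset mass
  have hPS : ∀ j : TreeJob L,
      ∑ ℓ' ∈ FF, (Wset L (s j) (q j) ℓ').card * 2 ^ (L - (ℓ' : ℕ))
        = ∑ v ∈ Vset L H (s j) (q j), treeSize L v := by
    intro j
    rw [Vset_sum L H (s j) (q j) (treeSize L), hFFdef, Finset.sum_filter]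
    refine Finset.sum_congr rfl fun ℓ' _ => ?_
    by_cases h : H ≤ (ℓ' : ℕ)
    · rw [if_pos h, if_pos h]
      simp only [treeSize]
      rw [Finset.sum_const, smul_eq_mul, mul_comm]
    · rw [if_neg h, if_neg h]; simp
  -- per-killer bound
  have hkill : ∀ j : TreeJob L,
      H * q j ≤ (L + 1) * (∑ v ∈ Vset L H (s j) (q j), treeSize L v)
        + 2 * (L + 1) * 2 ^ H := by
    intro j
    calc H * q j = FF.card * q j := by rw [hcardFF]
      _ = ∑ _ℓ' ∈ FF, q j := by rw [Finset.sum_const, smul_eq_mul]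
      _ ≤ ∑ ℓ' ∈ FF, ((Wset L (s j) (q j) ℓ').card + 2) * ((L + 1) * 2 ^ (L - (ℓ' : ℕ))) :=
          Finset.sum_le_sum fun ℓ' _ => killer_bound L (s j) (q j) (hSQ j) ℓ'
      _ = (L + 1) * (∑ ℓ' ∈ FF, (Wset L (s j) (q j) ℓ').card * 2 ^ (L - (ℓ' : ℕ)))
            + 2 * (L + 1) * ∑ ℓ' ∈ FF, 2 ^ (L - (ℓ' : ℕ)) := by
          rw [Finset.mul_sum, Finset.mul_sum, ← Finset.sum_add_distrib]
          exact Finset.sum_congr rfl fun ℓ' _ => by ring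
      _ ≤ (L + 1) * (∑ v ∈ Vset L H (s j) (q j), treeSize L v)
            + 2 * (L + 1) * 2 ^ H := by
          rw [hPS j]
          exact Nat.add_le_add_left (Nat.mul_le_mul_left _ hgeoFF) _
  -- cardinality and size of the top part
  have hTopcard : Top.card ≤ 2 ^ H := by
    calc Top.card = ∑ _j ∈ Top, 1 := by rw [Finset.card_eq_sum_ones]
      _ = ∑ ℓ ∈ (univ : Finset (Fin (L + 1))).filter (fun ℓ : Fin (L + 1) => (ℓ : ℕ) < H),
            ∑ _k : Fin (2 ^ (ℓ : ℕ)), 1 := by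
          rw [hTopdef]; exact filter_level_sum L (fun m => m < H) (fun _ => 1)
      _ = ∑ ℓ ∈ (univ : Finset (Fin (L + 1))).filter (fun ℓ : Fin (L + 1) => (ℓ : ℕ) < H),
            2 ^ (ℓ : ℕ) := by
          refine Finset.sum_congr rfl fun ℓ _ => ?_; simp
      _ = ∑ m ∈ (Finset.range (L + 1)).filter (fun m => m < H), 2 ^ m :=
          sum_fin_filter (fun m => m < H) (fun m => 2 ^ m)
      _ ≤ 2 ^ H := sum_range_lt_pow hH2 hH1
  have hPT : ∑ j ∈ Top, treeSize L j = H * 2 ^ L := by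
    calc ∑ j ∈ Top, treeSize L j
        = ∑ ℓ ∈ (univ : Finset (Fin (L + 1))).filter (fun ℓ : Fin (L + 1) => (ℓ : ℕ) < H),
            ∑ k : Fin (2 ^ (ℓ : ℕ)), treeSize L ⟨ℓ, k⟩ := by
          rw [hTopdef]; exact filter_level_sum L (fun m => m < H) (treeSize L)
      _ = ∑ ℓ ∈ (univ : Finset (Fin (L + 1))).filter (fun ℓ : Fin (L + 1) => (ℓ : ℕ) < H),
            2 ^ L := Finset.sum_congr rfl fun ℓ _ => level_size_sum L ℓ
      _ = ((univ : Finset (Fin (L + 1))).filter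
            (fun ℓ : Fin (L + 1) => (ℓ : ℕ) < H)).card * 2 ^ L := by
          rw [Finset.sum_const, smul_eq_mul]
      _ = H * 2 ^ L := by
          rw [card_fin_filter (fun m => m < H), card_range_lt hH2 hH1]
  have hPB : ∑ j ∈ Bot, treeSize L j = H * 2 ^ L := by
    calc ∑ j ∈ Bot, treeSize L j
        = ∑ ℓ ∈ (univ : Finset (Fin (L + 1))).filter (fun ℓ : Fin (L + 1) => ¬ (ℓ : ℕ) < H),
            ∑ k : Fin (2 ^ (ℓ : ℕ)), treeSize L ⟨ℓ, k⟩ := by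
          rw [hBotdef]; exact filter_level_sum L (fun m => ¬ m < H) (treeSize L)
      _ = ∑ ℓ ∈ (univ : Finset (Fin (L + 1))).filter (fun ℓ : Fin (L + 1) => ¬ (ℓ : ℕ) < H),
            2 ^ L := Finset.sum_congr rfl fun ℓ _ => level_size_sum L ℓ
      _ = ((univ : Finset (Fin (L + 1))).filter
            (fun ℓ : Fin (L + 1) => ¬ (ℓ : ℕ) < H)).card * 2 ^ L := by
          rw [Finset.sum_const, smul_eq_mul]
      _ = H * 2 ^ L := by
          rw [card_fin_filter (fun m => ¬ m < H), card_range_not_lt hH2 hH1]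
  have hsplit : ∑ j ∈ Top, q j + ∑ j ∈ Bot, q j = ∑ j, q j := by
    rw [hTopdef, hBotdef]
    exact Finset.sum_filter_add_sum_filter_not univ _ q
  have hKsum : ∑ j ∈ Top, ∑ v ∈ Vset L H (s j) (q j), treeSize L v
      = ∑ v ∈ K, treeSize L v := by
    rw [hKdef]; exact (Finset.sum_biUnion hVdisj).symm
  have hA1 : H * (∑ j ∈ Top, q j)
      ≤ (L + 1) * (∑ v ∈ K, treeSize L v) + Top.card * (2 * (L + 1) * 2 ^ H) := by
    calc H * ∑ j ∈ Top, q j = ∑ j ∈ Top, H * q j := Finset.mul_sum _ _ _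
      _ ≤ ∑ j ∈ Top, ((L + 1) * (∑ v ∈ Vset L H (s j) (q j), treeSize L v)
            + 2 * (L + 1) * 2 ^ H) := Finset.sum_le_sum fun j _ => hkill j
      _ = (L + 1) * (∑ j ∈ Top, ∑ v ∈ Vset L H (s j) (q j), treeSize L v)
            + Top.card * (2 * (L + 1) * 2 ^ H) := by
          rw [Finset.sum_add_distrib, ← Finset.mul_sum, Finset.sum_const, smul_eq_mul]
      _ = _ := by rw [hKsum]
  have hA2 : ∑ j ∈ Top, q j ≤ 2 * (∑ v ∈ K, treeSize L v) + 8 * 2 ^ L := by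
    have hHL1 : H + H = L + 1 := by omega
    have hcc : Top.card * (2 * (L + 1) * 2 ^ H) ≤ H * (8 * 2 ^ L) := by
      calc Top.card * (2 * (L + 1) * 2 ^ H)
          ≤ 2 ^ H * (2 * (L + 1) * 2 ^ H) := Nat.mul_le_mul_right _ hTopcard
        _ = (L + 1) * (2 * (2 ^ H * 2 ^ H)) := by ring
        _ = (L + 1) * (2 * 2 ^ (L + 1)) := by rw [← pow_add, hHL1]
        _ = 2 * H * (2 * (2 * 2 ^ L)) := by rw [← hH2, pow_succ]; ring
        _ = H * (8 * 2 ^ L) := by ring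
    have h : H * (∑ j ∈ Top, q j)
        ≤ H * (2 * (∑ v ∈ K, treeSize L v) + 8 * 2 ^ L) := by
      calc H * (∑ j ∈ Top, q j)
          ≤ (L + 1) * (∑ v ∈ K, treeSize L v) + Top.card * (2 * (L + 1) * 2 ^ H) := hA1
        _ ≤ (L + 1) * (∑ v ∈ K, treeSize L v) + H * (8 * 2 ^ L) :=
            Nat.add_le_add_left hcc _
        _ = H * (2 * (∑ v ∈ K, treeSize L v) + 8 * 2 ^ L) := by rw [hH2]; ring
    exact Nat.le_of_mul_le_mul_left h (by omega)
  have hA3 : ∑ j ∈ Top, q j ≤ H * 2 ^ L := by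
    rw [← hPT]; exact Finset.sum_le_sum fun j _ => hq j
  have hA4 : ∑ j ∈ Bot, q j + ∑ v ∈ K, treeSize L v ≤ H * 2 ^ L := by
    have e1 := Finset.sum_sdiff (f := q) hKsub
    have e2 : ∑ v ∈ K, q v = 0 := Finset.sum_eq_zero hKzero
    have e3 : ∑ v ∈ Bot \ K, q v ≤ ∑ v ∈ Bot \ K, treeSize L v :=
      Finset.sum_le_sum fun v _ => hq v
    have e4 := Finset.sum_sdiff (f := treeSize L) hKsub
    rw [hPB] at e4
    omega
  have key : 5 * ∑ j, q j ≤ 4 * ((L + 1) * 2 ^ L) := by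
    have hgoal : 4 * ((L + 1) * 2 ^ L) = 8 * (H * 2 ^ L) := by rw [hH2]; ring
    rw [hgoal]
    have h40 : 40 * 2 ^ L ≤ H * 2 ^ L := Nat.mul_le_mul_right _ hH40
    have final : ∀ a b k u v t : ℕ, a ≤ 2 * k + 8 * u → a ≤ v → b + k ≤ v →
        40 * u ≤ v → a + b = t → 5 * t ≤ 8 * v := by
      intro a b k u v t h1 h2 h3 h4 h5; omega
    exact final _ _ _ _ _ _ hA2 hA3 hA4 h40 hsplit
  have hc := (Nat.cast_le (α := ℝ)).mpr key
  push_cast at hc ⊢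
  linarith
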